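/- Every α-continuous function between topological spaces where the domain is countably α-compact has countably compact image; in particular, the α-continuous image of a countably α-compact space is countably compact. -/
import Mathlib


def AlphaOpen {X : Type*} [TopologicalSpace X] (A : Set X) : Prop :=
  A ⊆ interior (closure (interior A))

def AlphaClosed {X : Type*} [TopologicalSpace X] (A : Set X) : Prop :=
  AlphaOpen Aᶜ

def AlphaContinuous {X Y : Type*} [TopologicalSpace X] [TopologicalSpace Y]
    (f : X → Y) : Prop :=
  ∀ V : Set Y, IsOpen V → AlphaOpen (f ⁻¹' V)

def CountablyAlphaCompact (X : Type*) [TopologicalSpace X] : Prop :=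
  ∀ U : ℕ → Set X, (∀ n, AlphaOpen (U n)) → (⋃ n, U n) = Set.univ →
    ∃ t : Finset ℕ, (⋃ n ∈ t, U n) = Set.univ

def AlphaCompact (X : Type*) [TopologicalSpace X] : Prop :=
  ∀ 𝒰 : Set (Set X), (∀ A ∈ 𝒰, AlphaOpen A) → ⋃₀ 𝒰 = Set.univ →
    ∃ 𝒱 ⊆ 𝒰, 𝒱.Finite ∧ ⋃₀ 𝒱 = Set.univ

def CountablyCompact (X : Type*) [TopologicalSpace X] : Prop :=
  ∀ U : ℕ → Set X, (∀ n, IsOpen (U n)) → (⋃ n, U n) = Set.univ →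
    ∃ t : Finset ℕ, (⋃ n ∈ t, U n) = Set.univ
def CountablyCompactIn {Y : Type*} [TopologicalSpace Y] (K : Set Y) : Prop :=
  ∀ U : ℕ → Set Y, (∀ n, IsOpen (U n)) → K ⊆ ⋃ n, U n →
    ∃ t : Finset ℕ, K ⊆ ⋃ n ∈ t, U n

theorem stmt13 {X Y : Type*} [TopologicalSpace X] [TopologicalSpace Y]
    (f : X → Y) (hf : AlphaContinuous f) (hX : CountablyAlphaCompact X) :
    CountablyCompactIn (Set.range f) ∧
      (Function.Surjective f → CountablyCompact Y) := by
  have h1 : CountablyCompactIn (Set.range f) := by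
    intro U hU hcov
    obtain ⟨t, ht⟩ := hX (fun n => f ⁻¹' U n) (fun n => hf _ (hU n)) (by
      apply Set.eq_univ_of_forall
      intro x
      have : f x ∈ ⋃ n, U n := hcov ⟨x, rfl⟩
      simpa using this)
    refine ⟨t, ?_⟩
    rintro y ⟨x, rfl⟩
    have : x ∈ ⋃ n ∈ t, f ⁻¹' U n := ht ▸ Set.mem_univ x
    simp only [Set.mem_iUnion] at this ⊢
    obtain ⟨n, hn, hx⟩ := this
    exact ⟨n, hn, hx⟩
  refine ⟨h1, fun hsurj U hU hcov => ?_⟩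
  obtain ⟨t, ht⟩ := h1 U hU (hcov ▸ Set.subset_univ _)
  exact ⟨t, Set.eq_univ_of_forall fun y => ht (hsurj y)⟩
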